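/- For every 2NFA A with state set Q and states q₁, q₂ ∈ Q, the language M_{q₁,q₂} of words u₂ such that there exist a word u accepted by A, an accepting run ρ of A on u decomposed as ρ₁ (q₁,i₁) ρ₂ (q₂,i₂) ρ₃ with i₁ ≤ i₂ and u₂ = u[i₁..i₂], is a regular language. -/

import Mathlib

/-- A nondeterministic two-way finite automaton: `delta p a q d` means a transition
from `p` reading `a` to `q`, moving right (`d = true`) or left (`d = false`). -/
structure TwoNFA (A Q : Type*) where
  init : Q
  final : Q → Prop
  delta : Q → A → Q → Bool → Prop

/-- The `i`-th letter of `u` (1-based). -/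
def letterAt {A : Type*} [Inhabited A] (u : List A) (i : ℕ) : A := u.getD (i - 1) default

/-- `ρ 1, …, ρ m` is a run of the 2NFA on `u` (positions are 1-based). -/
def IsRunA {A Q : Type*} [Inhabited A] (M : TwoNFA A Q) (u : List A) (m : ℕ)
    (ρ : ℕ → Q × ℕ) : Prop :=
  1 ≤ m ∧ ρ 1 = (M.init, 1) ∧ (ρ m).2 ≤ u.length + 1 ∧
  ∀ k, 1 ≤ k → k < m →
    1 ≤ (ρ k).2 ∧ (ρ k).2 ≤ u.length ∧
    ∃ d : Bool, M.delta (ρ k).1 (letterAt u ((ρ k).2)) (ρ (k + 1)).1 d ∧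
      (if d then (ρ (k + 1)).2 = (ρ k).2 + 1 else (ρ k).2 = (ρ (k + 1)).2 + 1)

/-- An accepting run ends at position `n + 1` in a final state. -/
def IsAccRunA {A Q : Type*} [Inhabited A] (M : TwoNFA A Q) (u : List A) (m : ℕ)
    (ρ : ℕ → Q × ℕ) : Prop :=
  IsRunA M u m ρ ∧ (ρ m).2 = u.length + 1 ∧ M.final (ρ m).1

/-- The crossing sequence of the run `ρ` (of length `m`) at position `i`. -/
def CSA2NFA {Q : Type*} (ρ : ℕ → Q × ℕ) (m i : ℕ) : List Q :=
  ((((List.range m).map (· + 1)).filter fun k => (ρ k).2 = i)).map fun k => (ρ k).1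

/-- The language `M_{q₁,q₂}` of factors `u[i₁..i₂]` of words `u` accepted by the
2NFA `M` along an accepting run visiting `(q₁, i₁)` and later `(q₂, i₂)` with
`i₁ ≤ i₂`. -/
def Mset {A Q : Type*} [Inhabited A] (M : TwoNFA A Q) (q₁ q₂ : Q) : Set (List A) :=
  { w | ∃ (u : List A) (m : ℕ) (ρ : ℕ → Q × ℕ),
      IsAccRunA M u m ρ ∧
      ∃ k₁ k₂, 1 ≤ k₁ ∧ k₁ ≤ k₂ ∧ k₂ ≤ m ∧
        (ρ k₁).1 = q₁ ∧ (ρ k₂).1 = q₂ ∧ (ρ k₁).2 ≤ (ρ k₂).2 ∧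
        w = (u.drop ((ρ k₁).2 - 1)).take ((ρ k₂).2 - (ρ k₁).2 + 1) }

namespace Stmt13

variable {A Q : Type*} [Inhabited A]

/-- One step of the 2NFA `M` on word `u`. -/
def Step (M : TwoNFA A Q) (u : List A) (c c' : Q × ℕ) : Prop :=
  1 ≤ c.2 ∧ c.2 ≤ u.length ∧ ∃ d : Bool, M.delta c.1 (letterAt u c.2) c'.1 d ∧
    (if d then c'.2 = c.2 + 1 else c.2 = c'.2 + 1)

/-- Reflexive transitive closure of `Step`. -/
abbrev RT (M : TwoNFA A Q) (u : List A) : Q × ℕ → Q × ℕ → Prop :=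
  Relation.ReflTransGen (Step M u)

/-- Runs of a given length. -/
inductive RunN (M : TwoNFA A Q) (u : List A) : ℕ → Q × ℕ → Q × ℕ → Prop
  | refl (c : Q × ℕ) : RunN M u 0 c c
  | head {c d c' : Q × ℕ} {n : ℕ} : Step M u c d → RunN M u n d c' → RunN M u (n+1) c c'

theorem RunN.toRT {M : TwoNFA A Q} {u : List A} {n : ℕ} {c c' : Q × ℕ}
    (h : RunN M u n c c') : RT M u c c' := by
  induction h with
  | refl => exact Relation.ReflTransGen.refl
  | head s _ ih => exact Relation.ReflTransGen.head s ih

theorem RT.toRunN {M : TwoNFA A Q} {u : List A} {c c' : Q × ℕ}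
    (h : RT M u c c') : ∃ n, RunN M u n c c' := by
  induction h using Relation.ReflTransGen.head_induction_on with
  | refl => exact ⟨0, RunN.refl c'⟩
  | head s _ ih => exact ⟨ih.choose + 1, RunN.head s ih.choose_spec⟩

theorem RunN.trans {M : TwoNFA A Q} {u : List A} {n k : ℕ} {a b c : Q × ℕ}
    (h : RunN M u n a b) (h' : RunN M u k b c) : RunN M u (n + k) a c := by
  induction h with
  | refl => simpa using h'
  | head s _ ih => exact (Nat.succ_add _ _) ▸ RunN.head s (ih h')

/-- `MsetRTG`: closure-style description of `Mset`. -/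
def MsetRTG (M : TwoNFA A Q) (q₁ q₂ : Q) : Set (List A) :=
  { w | ∃ (u : List A) (f : Q) (c₁ c₂ : Q × ℕ),
      RT M u (M.init, 1) c₁ ∧ RT M u c₁ c₂ ∧ RT M u c₂ (f, u.length + 1) ∧
      M.final f ∧ c₁.1 = q₁ ∧ c₂.1 = q₂ ∧ c₁.2 ≤ c₂.2 ∧
      w = (u.drop (c₁.2 - 1)).take (c₂.2 - c₁.2 + 1) }

section Equiv

variable {M : TwoNFA A Q} {u : List A}

theorem run_rt {m : ℕ} {ρ : ℕ → Q × ℕ} (h : IsRunA M u m ρ) {i j : ℕ}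
    (hi : 1 ≤ i) (hij : i ≤ j) (hj : j ≤ m) : RT M u (ρ i) (ρ j) := by
  induction j, hij using Nat.le_induction with
  | base => exact Relation.ReflTransGen.refl
  | succ j hij ih =>
    refine Relation.ReflTransGen.tail (ih (le_trans (Nat.le_succ j) hj)) ?_
    have hk := h.2.2.2 j (le_trans hi hij) (by omega)
    exact ⟨hk.1, hk.2.1, hk.2.2⟩

theorem mset_subset_rtg (M : TwoNFA A Q) (q₁ q₂ : Q) :
    Mset M q₁ q₂ ⊆ MsetRTG M q₁ q₂ := by
  rintro w ⟨u, m, ρ, ⟨hrun, hend, hfin⟩, k₁, k₂, h1, h12, h2m, hq1, hq2, hpos, hw⟩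
  refine ⟨u, (ρ m).1, ρ k₁, ρ k₂, ?_, ?_, ?_, hfin, hq1, hq2, hpos, hw⟩
  · have := run_rt hrun (le_refl 1) h1 (le_trans h12 h2m)
    rwa [hrun.2.1] at this
  · exact run_rt hrun h1 h12 h2m
  · have e : ((ρ m).1, u.length + 1) = ρ m := by rw [← hend]
    rw [e]
    exact run_rt hrun (le_trans h1 h12) h2m (le_refl m)

/-- Turn a `RunN` into a finite run function. -/
theorem RunN.toFun {n : ℕ} {c c' : Q × ℕ} (h : RunN M u n c c') :
    ∃ ρ : ℕ → Q × ℕ, ρ 1 = c ∧ ρ (n + 1) = c' ∧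
      ∀ k, 1 ≤ k → k ≤ n → Step M u (ρ k) (ρ (k + 1)) := by
  induction h with
  | refl c => exact ⟨fun _ => c, rfl, rfl, fun k hk hk' => by omega⟩
  | @head c d c' n s _ ih =>
    obtain ⟨ρ', h1, h2, hs⟩ := ih
    refine ⟨fun k => if k ≤ 1 then c else ρ' (k - 1), by simp, ?_, ?_⟩
    · simpa using h2
    · intro k hk hkn
      rcases Nat.eq_or_lt_of_le hk with hk1 | hk2
      · simp only [← hk1]
        simpa [h1] using s
      · have e1 : ¬ (k ≤ 1) := by omega
        have e2 : ¬ (k + 1 ≤ 1) := by omega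
        simp only [e1, e2, if_false]
        have e3 : k + 1 - 1 = (k - 1) + 1 := by omega
        rw [e3]
        exact hs (k-1) (by omega) (by omega)

/-- Glue two finite run functions. -/
theorem glueFun {n k : ℕ} {c c' c'' : Q × ℕ} {ρa ρb : ℕ → Q × ℕ}
    (ha1 : ρa 1 = c) (ha2 : ρa (n + 1) = c') (has : ∀ j, 1 ≤ j → j ≤ n → Step M u (ρa j) (ρa (j+1)))
    (hb1 : ρb 1 = c') (hb2 : ρb (k + 1) = c'') (hbs : ∀ j, 1 ≤ j → j ≤ k → Step M u (ρb j) (ρb (j+1))) :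
    ∃ ρ : ℕ → Q × ℕ, ρ 1 = c ∧ ρ (n + k + 1) = c'' ∧
      (∀ j, 1 ≤ j → j ≤ n + 1 → ρ j = ρa j) ∧ (∀ i, 1 ≤ i → ρ (n + i) = ρb i) ∧
      ∀ j, 1 ≤ j → j ≤ n + k → Step M u (ρ j) (ρ (j+1)) := by
  refine ⟨fun j => if j ≤ n then ρa j else ρb (j - n), ?_, ?_, ?_, ?_, ?_⟩
  · rcases Nat.eq_zero_or_pos n with h0 | h0
    · have e : c' = c := by rw [← ha1, ← ha2, h0]
      simp [h0, hb1, e]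
    · have h1 : (1:ℕ) ≤ n := h0
      simp [h1, ha1]
  · have : ¬ (n + k + 1 ≤ n) := by omega
    simp only [this, if_false]
    have : n + k + 1 - n = k + 1 := by omega
    rw [this, hb2]
  · intro j hj hjn
    rcases Nat.lt_or_ge j (n+1) with h | h
    · simp [Nat.lt_succ_iff.mp h]
    · have hj' : j = n + 1 := by omega
      have : ¬ (j ≤ n) := by omega
      simp only [this, if_false, hj']
      simp [hb1, ha2]
  · intro i hi
    have : ¬ (n + i ≤ n) := by omega
    simp only [this, if_false]
    congr 1
    omega
  · intro j hj hjnk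
    rcases Nat.lt_or_ge j n with h | h
    · have h1 : j ≤ n := by omega
      have h2 : j + 1 ≤ n := by omega
      simp only [h1, h2, if_true]
      exact has j hj (by omega)
    · rcases Nat.eq_or_lt_of_le h with he | hl
      · -- j = n (so n ≥ 1)
        have h1 : j ≤ n := by omega
        have h2 : ¬ (j + 1 ≤ n) := by omega
        simp only [h1, h2, if_true, if_false]
        have : j + 1 - n = 1 := by omega
        rw [this, hb1, ← ha2]
        have e2 : n + 1 = j + 1 := by omega
        rw [e2]
        exact has j hj (by omega)
      · have h1 : ¬ (j ≤ n) := by omega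
        have h2 : ¬ (j + 1 ≤ n) := by omega
        simp only [h1, h2, if_false]
        have : j + 1 - n = (j - n) + 1 := by omega
        rw [this]
        exact hbs (j - n) (by omega) (by omega)

theorem rtg_subset_mset (M : TwoNFA A Q) (q₁ q₂ : Q) :
    MsetRTG M q₁ q₂ ⊆ Mset M q₁ q₂ := by
  rintro w ⟨u, f, c₁, c₂, hA, hB, hC, hfin, hq1, hq2, hpos, hw⟩
  obtain ⟨n₁, hA⟩ := hA.toRunN
  obtain ⟨n₂, hB⟩ := hB.toRunN
  obtain ⟨n₃, hC⟩ := hC.toRunN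
  obtain ⟨ρa, ha1, ha2, has⟩ := hA.toFun
  obtain ⟨ρb, hb1, hb2, hbs⟩ := hB.toFun
  obtain ⟨ρc, hc1, hc2, hcs⟩ := hC.toFun
  obtain ⟨ρd, hd1, hd2, hdg1, hdg2, hds⟩ := glueFun hb1 hb2 hbs hc1 hc2 hcs
  obtain ⟨ρ, h1, h2, hg1, hg2, hs⟩ := glueFun ha1 ha2 has hd1 hd2 hds
  refine ⟨u, n₁ + (n₂ + n₃) + 1, ρ, ⟨⟨by omega, h1, ?_, ?_⟩, ?_, ?_⟩,
    n₁ + 1, n₁ + n₂ + 1, by omega, by omega, by omega, ?_, ?_, ?_, ?_⟩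
  · rw [h2]
  · intro k hk hkm
    have := hs k hk (by omega)
    exact ⟨this.1, this.2.1, this.2.2⟩
  · rw [h2]
  · rw [h2]; exact hfin
  · rw [hg1 (n₁+1) (by omega) (by omega), ha2, hq1]
  · have e : n₁ + n₂ + 1 = n₁ + (n₂ + 1) := by omega
    rw [e, hg2 (n₂+1) (by omega), hdg1 (n₂+1) (by omega) (by omega), hb2, hq2]
  · rw [hg1 (n₁+1) (by omega) (by omega), ha2]
    have e : n₁ + n₂ + 1 = n₁ + (n₂ + 1) := by omega
    rw [e, hg2 (n₂+1) (by omega), hdg1 (n₂+1) (by omega) (by omega), hb2]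
    exact hpos
  · rw [hg1 (n₁+1) (by omega) (by omega), ha2]
    have e : n₁ + n₂ + 1 = n₁ + (n₂ + 1) := by omega
    rw [e, hg2 (n₂+1) (by omega), hdg1 (n₂+1) (by omega) (by omega), hb2]
    exact hw

theorem mset_eq_rtg (M : TwoNFA A Q) (q₁ q₂ : Q) : Mset M q₁ q₂ = MsetRTG M q₁ q₂ :=
  le_antisymm (mset_subset_rtg M q₁ q₂) (rtg_subset_mset M q₁ q₂)

end Equiv

/-! ### Behaviors of the left part at a border -/

/-- States in which the run may first exit the left part `v` to the right. -/
def BO (M : TwoNFA A Q) (v : List A) : Set Q :=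
  {p | RT M v (M.init, 1) (p, v.length + 1)}

/-- Same, passing through `(q₁, a)` on the way. -/
def BO1 (M : TwoNFA A Q) (q₁ : Q) (v : List A) (a : ℕ) : Set Q :=
  {p | RT M v (M.init, 1) (q₁, a) ∧ RT M v (q₁, a) (p, v.length + 1)}

/-- Excursion relation: enter `v` at its last position, exit to the right. -/
def BR (M : TwoNFA A Q) (v : List A) : Set (Q × Q) :=
  {x | RT M v (x.1, v.length) (x.2, v.length + 1)}

/-- Excursion passing through `(q₁, a)`. -/
def BR1 (M : TwoNFA A Q) (q₁ : Q) (v : List A) (a : ℕ) : Set (Q × Q) :=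
  {x | RT M v (x.1, v.length) (q₁, a) ∧ RT M v (q₁, a) (x.2, v.length + 1)}

/-- Behavior tuples. -/
def TB (Q : Type*) : Type _ := Set Q × Set Q × Set (Q × Q) × Set (Q × Q)

def Beh (M : TwoNFA A Q) (q₁ : Q) (v : List A) (a : ℕ) : TB Q :=
  (BO M v, BO1 M q₁ v a, BR M v, BR1 M q₁ v a)

/-! ### Abstract runs over the right part -/

/-- A step of `M` inside the right part, in relative coordinates. -/
def RStep (M : TwoNFA A Q) (r : List A) (c c' : Q × ℕ) : Prop :=
  1 ≤ c.2 ∧ c.2 ≤ r.length ∧ ∃ d : Bool, M.delta c.1 (letterAt r c.2) c'.1 d ∧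
    (if d then c'.2 = c.2 + 1 else (2 ≤ c.2 ∧ c.2 = c'.2 + 1))

/-- Plain abstract step: a right-part step or an excursion through the left part. -/
def PStep (M : TwoNFA A Q) (RR : Set (Q × Q)) (r : List A) (c c' : Q × ℕ) : Prop :=
  RStep M r c c' ∨
  (c.2 = 1 ∧ c'.2 = 1 ∧ 1 ≤ r.length ∧
    ∃ q, M.delta c.1 (letterAt r 1) q false ∧ (q, c'.1) ∈ RR)

/-- Marked abstract step with mode bookkeeping; `bo` is the relative position of the
second marker if it lies in the right part. -/
def TStep (M : TwoNFA A Q) (q₂ : Q) (RR RR1 : Set (Q × Q)) (bo : Option ℕ) (r : List A)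
    (x x' : (Q × ℕ) × ℕ) : Prop :=
  (x'.2 = x.2 ∧ RStep M r x.1 x'.1) ∨
  (x.1.2 = 1 ∧ x'.1.2 = 1 ∧ 1 ≤ r.length ∧
    ∃ q, M.delta x.1.1 (letterAt r 1) q false ∧
      (((q, x'.1.1) ∈ RR ∧ x'.2 = x.2) ∨ ((q, x'.1.1) ∈ RR1 ∧ x.2 = 0 ∧ x'.2 = 1))) ∨
  (∃ j, bo = some j ∧ x.1 = (q₂, j) ∧ x'.1 = (q₂, j) ∧ x.2 = 1 ∧ x'.2 = 2)

def TBstart (β : TB Q) (μ : ℕ) (p : Q) : Prop := (μ = 0 ∧ p ∈ β.1) ∨ (μ = 1 ∧ p ∈ β.2.1)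

/-- Abstract acceptance: everything about `w ++ z ∈ Mset` that depends on the part up to
the border only through its behavior tuple `β`. -/
def AbsAcc (M : TwoNFA A Q) (q₂ : Q) (β : TB Q) (z : List A) : Prop :=
  (∃ y f p₀ μ₀, M.final f ∧ TBstart β μ₀ p₀ ∧
      Relation.ReflTransGen (TStep M q₂ β.2.2.1 β.2.2.2 (some z.length) (z ++ y))
        ((p₀, 1), μ₀) ((f, (z ++ y).length + 1), 2))
  ∨ (∃ p₀ μ₀, M.final q₂ ∧ TBstart β μ₀ p₀ ∧
      Relation.ReflTransGen (TStep M q₂ β.2.2.1 β.2.2.2 none z)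
        ((p₀, 1), μ₀) ((q₂, z.length + 1), 1))

/-! ### Letter and step transfer lemmas -/

theorem letter_left {v r : List A} {i : ℕ} (h1 : 1 ≤ i) (h2 : i ≤ v.length) :
    letterAt (v ++ r) i = letterAt v i :=
  List.getD_append _ _ _ _ (by omega)

theorem letter_right (v : List A) {r : List A} {j : ℕ} (h1 : 1 ≤ j) :
    letterAt (v ++ r) (v.length + j) = letterAt r j := by
  unfold letterAt
  rw [List.getD_append_right _ _ _ _ (by omega)]
  congr 1
  omega

variable {M : TwoNFA A Q}

theorem step_mono {v r : List A} {c c' : Q × ℕ} (h : Step M v c c') : Step M (v ++ r) c c' := by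
  obtain ⟨h1, h2, d, hd, hmov⟩ := h
  exact ⟨h1, by simp; omega, d, by rwa [letter_left h1 h2], hmov⟩

theorem rt_mono {v r : List A} {c c' : Q × ℕ} (h : RT M v c c') : RT M (v ++ r) c c' :=
  Relation.ReflTransGen.mono (fun _ _ hs => step_mono hs) _ _ h

theorem step_shift {v r : List A} {c c' : Q × ℕ} (h : RStep M r c c') :
    Step M (v ++ r) (c.1, v.length + c.2) (c'.1, v.length + c'.2) := by
  obtain ⟨h1, h2, d, hd, hmov⟩ := h
  refine ⟨by simp; omega, by simp; omega, d, ?_, ?_⟩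
  · rwa [letter_right v h1]
  · rcases d with _ | _
    · simp only [if_false, Bool.false_eq_true] at hmov ⊢
      omega
    · simp only [if_true] at hmov ⊢
      omega

theorem step_right {v r : List A} {c c' : Q × ℕ} (h : Step M (v ++ r) c c')
    (hc : v.length + 1 ≤ c.2) (hc' : v.length + 1 ≤ c'.2) :
    RStep M r (c.1, c.2 - v.length) (c'.1, c'.2 - v.length) := by
  obtain ⟨h1, h2, d, hd, hmov⟩ := h
  simp only [List.length_append] at h2
  have e : c.2 = v.length + (c.2 - v.length) := by omega
  refine ⟨by omega, by omega, d, ?_, ?_⟩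
  · rw [e, letter_right v (by omega)] at hd
    exact hd
  · rcases d with _ | _
    · simp only [if_false, Bool.false_eq_true] at hmov ⊢
      omega
    · simp only [if_true] at hmov ⊢
      omega

theorem step_left {v r : List A} {c c' : Q × ℕ} (h : Step M (v ++ r) c c')
    (hc : c.2 ≤ v.length) : Step M v c c' := by
  obtain ⟨h1, h2, d, hd, hmov⟩ := h
  exact ⟨h1, hc, d, by rwa [letter_left h1 hc] at hd, hmov⟩

theorem rt_v_stuck {v : List A} {c c' : Q × ℕ} (h : RT M v c c')
    (hc : v.length + 1 ≤ c.2) : c = c' := by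
  rcases Relation.ReflTransGen.cases_head h with h | ⟨d, hs, _⟩
  · exact h
  · exact absurd hs.2.1 (by omega)

/-! ### Decomposition lemmas at the border -/

theorem first_return {v r : List A} {n : ℕ} {c c' : Q × ℕ}
    (h : RunN M (v ++ r) n c c') (hc : c.2 ≤ v.length) (hc' : v.length + 1 ≤ c'.2) :
    ∃ p k, k ≤ n ∧ RT M v c (p, v.length + 1) ∧ RunN M (v ++ r) k (p, v.length + 1) c' := by
  induction h with
  | refl c => omega
  | @head c d c' n s hd ih =>
    rcases Nat.lt_or_ge v.length d.2 with h2 | h2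
    · -- d is at the border + 1 : first return found
      have hd2 : d.2 = v.length + 1 := by
        obtain ⟨e1, e2, dd, _, hmov⟩ := s
        rcases dd with _ | _ <;> simp at hmov <;> omega
      refine ⟨d.1, n, by omega, ?_, ?_⟩
      · have : Step M v c d := step_left s hc
        have e : (d.1, v.length + 1) = d := by rw [← hd2]
        rw [e]
        exact Relation.ReflTransGen.single this
      · have e : (d.1, v.length + 1) = d := by rw [← hd2]
        rw [e]
        exact hd
    · obtain ⟨p, k, hk, h1, h2'⟩ := ih h2 hc'
      exact ⟨p, k, by omega, Relation.ReflTransGen.head (step_left s hc) h1, h2'⟩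

theorem last_entry {v r : List A} {n : ℕ} {c c' : Q × ℕ}
    (h : RunN M (v ++ r) n c c') (hc' : c'.2 ≤ v.length) :
    RT M v c c' ∨
    ∃ g' g k, k ≤ n ∧ RunN M (v ++ r) k c (g', v.length + 1) ∧ 1 ≤ r.length ∧
      M.delta g' (letterAt r 1) g false ∧ RT M v (g, v.length) c' := by
  induction h with
  | refl c => exact Or.inl Relation.ReflTransGen.refl
  | @head c d c' n s hd ih =>
    rcases ih hc' with hv | ⟨g', g, k, hk, hrun, hr, hdel, hrt⟩
    · rcases le_or_gt c.2 v.length with h2 | h2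
      · exact Or.inl (Relation.ReflTransGen.head (step_left s h2) hv)
      · -- c is strictly right of the border, d must be at the border
        have hdd : d.2 ≤ v.length := by
          by_contra hcon
          have := congrArg Prod.snd (rt_v_stuck hv (by omega))
          omega
        have hc2 : c.2 = v.length + 1 ∧ d.2 = v.length := by
          obtain ⟨e1, e2, dd, _, hmov⟩ := s
          rcases dd with _ | _ <;> simp at hmov <;> omega
        obtain ⟨e1, e2, dd, hdel, hmov⟩ := s
        have hddf : dd = false := by
          rcases dd with _ | _
          · rfl
          · simp at hmov; omega
        subst hddf
        refine Or.inr ⟨c.1, d.1, 0, by omega, ?_, ?_, ?_, ?_⟩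
        · have e : (c.1, v.length + 1) = c := by rw [← hc2.1]
          rw [e]; exact RunN.refl c
        · simp only [List.length_append] at e2; omega
        · rwa [hc2.1, letter_right v (le_refl 1)] at hdel
        · have e : (d.1, v.length) = d := by rw [← hc2.2]
          rw [e]; exact hv
    · exact Or.inr ⟨g', g, k + 1, by omega, RunN.head s hrun, hr, hdel, hrt⟩

theorem plainDecomp {v r : List A} {n : ℕ} {c c' : Q × ℕ}
    (h : RunN M (v ++ r) n c c') (hc : v.length + 1 ≤ c.2) (hc' : v.length + 1 ≤ c'.2) :
    Relation.ReflTransGen (PStep M (BR M v) r) (c.1, c.2 - v.length) (c'.1, c'.2 - v.length) := by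
  induction n using Nat.strong_induction_on generalizing c with
  | _ n IH =>
    cases h with
    | refl => exact Relation.ReflTransGen.refl
    | @head _ d _ n' s hd =>
      rcases Nat.lt_or_ge v.length d.2 with h2 | h2
      · exact Relation.ReflTransGen.head (Or.inl (step_right s hc h2)) (IH n' (by omega) hd h2)
      · -- the step enters the left part: d.2 = v.length, c.2 = v.length + 1
        have hc2 : c.2 = v.length + 1 ∧ d.2 = v.length := by
          obtain ⟨e1, e2, dd, _, hmov⟩ := s
          rcases dd with _ | _ <;> simp at hmov <;> omega
        obtain ⟨p, k, hk, hrt, hrem⟩ := first_return hd (by omega) hc'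
        obtain ⟨e1, e2, dd, hdel, hmov⟩ := s
        have hddf : dd = false := by
          rcases dd with _ | _
          · rfl
          · simp at hmov; omega
        subst hddf
        refine Relation.ReflTransGen.head (b := ((p, 1) : Q × ℕ)) (Or.inr ⟨by omega, rfl, ?_, d.1, ?_, ?_⟩) ?_
        · simp only [List.length_append] at e2; omega
        · rwa [hc2.1, letter_right v (le_refl 1)] at hdel
        · show RT M v (d.1, v.length) (p, v.length + 1)
          have e : (d.1, v.length) = d := by rw [← hc2.2]
          rw [e]; exact hrt
        · have := IH k (by omega) hrem (by omega)
          simpa using this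

theorem startDecomp {v r : List A} {n : ℕ} {c' : Q × ℕ}
    (h : RunN M (v ++ r) n (M.init, 1) c') (hv : 1 ≤ v.length) (hc' : v.length + 1 ≤ c'.2) :
    ∃ p₀ ∈ BO M v,
      Relation.ReflTransGen (PStep M (BR M v) r) (p₀, 1) (c'.1, c'.2 - v.length) := by
  obtain ⟨p, k, hk, hrt, hrem⟩ := first_return h (by simpa) hc'
  have := plainDecomp hrem (by simp) hc'
  simp only [Nat.add_sub_cancel_left] at this
  exact ⟨p, hrt, by simpa using this⟩

theorem liftP {RR RR1 : Set (Q × Q)} {bo : Option ℕ} {r : List A} {q₂ : Q} {c c' : Q × ℕ}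
    {μ : ℕ} (h : Relation.ReflTransGen (PStep M RR r) c c') :
    Relation.ReflTransGen (TStep M q₂ RR RR1 bo r) (c, μ) (c', μ) := by
  induction h with
  | refl => exact Relation.ReflTransGen.refl
  | tail _ hs ih =>
    refine Relation.ReflTransGen.tail ih ?_
    rcases hs with hs | ⟨h1, h2, h3, q, hdel, hmem⟩
    · exact Or.inl ⟨rfl, hs⟩
    · exact Or.inr (Or.inl ⟨h1, h2, h3, q, hdel, Or.inl ⟨hmem, rfl⟩⟩)

/-! ### The main decomposition theorem -/

theorem beh_proj (M : TwoNFA A Q) (q₁ : Q) (v : List A) (a : ℕ) :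
    (Beh M q₁ v a).1 = BO M v ∧ (Beh M q₁ v a).2.1 = BO1 M q₁ v a ∧
    (Beh M q₁ v a).2.2.1 = BR M v ∧ (Beh M q₁ v a).2.2.2 = BR1 M q₁ v a :=
  ⟨rfl, rfl, rfl, rfl⟩

theorem decompose {q₁ q₂ : Q} {w z : List A} (hw : w ≠ []) (hz : z ≠ [])
    (h : (w ++ z) ∈ MsetRTG M q₁ q₂) :
    ∃ x : List A, AbsAcc M q₂ (Beh M q₁ (x ++ w) (x.length + 1)) z := by
  classical
  obtain ⟨u, f, c₁, c₂, hA, hB, hC, hfin, hq1, hq2, hpos, hweq⟩ := h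
  have hwl : 1 ≤ w.length := List.length_pos_iff.mpr hw
  have hzl : 1 ≤ z.length := List.length_pos_iff.mpr hz
  have hlen : w.length + z.length = min (c₂.2 - c₁.2 + 1) (u.length - (c₁.2 - 1)) := by
    have := congrArg List.length hweq
    simpa using this
  have hi1n : c₁.2 - 1 < u.length := by omega
  rcases Relation.ReflTransGen.cases_head hC with hC0 | ⟨cd, hCs, _⟩
  · -- Case (ii) : c₂ is the final configuration
    have hc22 : c₂.2 = u.length + 1 := by rw [hC0]
    have hfq : f = q₂ := by rw [← hq2, hC0]
    have h11 : 1 ≤ c₁.2 := by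
      rcases Relation.ReflTransGen.cases_head hB with hB0 | ⟨bd, hBs, _⟩
      · rw [hB0]; omega
      · exact hBs.1
    set x := u.take (c₁.2 - 1) with hxdef
    have hxl : x.length = c₁.2 - 1 := by simp [hxdef]; omega
    have hudec : u = x ++ (w ++ z) := by
      have h1 : u = x ++ u.drop (c₁.2 - 1) := (List.take_append_drop _ u).symm
      have h2 : w ++ z = u.drop (c₁.2 - 1) := by
        rw [hweq]
        apply List.take_of_length_le
        simp
        omega
      rw [← h2] at h1
      exact h1
    set v := x ++ w with hvdef
    have hu' : u = v ++ z := by rw [hvdef, hudec, List.append_assoc]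
    have hbl : v.length = c₁.2 - 1 + w.length := by simp [hvdef, hxl]
    have ha : c₁.2 = x.length + 1 := by omega
    rw [hu'] at hA hB
    have hc1pair : c₁ = (q₁, x.length + 1) := by rw [← hq1, ← ha]
    obtain ⟨n₂, hB'⟩ := hB.toRunN
    obtain ⟨p, k₂, _, hBv, hBrem⟩ := first_return hB' (by omega) (by omega)
    have hc22' : c₂.2 = (v ++ z).length + 1 := by rw [← hu']; exact hc22
    have habs2 := plainDecomp hBrem (by omega) (by simp at hc22' ⊢; omega)
    simp only [Nat.add_sub_cancel_left] at habs2
    have hc2rel : c₂.2 - v.length = z.length + 1 := by simp at hc22'; omega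
    rw [hc2rel, hq2] at habs2
    obtain ⟨n₁, hA'⟩ := hA.toRunN
    refine ⟨x, Or.inr ?_⟩
    rcases last_entry hA' (by omega) with hAv | ⟨g', g, k, hk, hAk, hr1, hdel, hAg⟩
    · refine ⟨p, 1, hfq ▸ hfin, Or.inr ⟨rfl, ⟨hc1pair ▸ hAv, hc1pair ▸ hBv⟩⟩, ?_⟩
      exact liftP habs2
    · obtain ⟨p₀, hp₀, habs1⟩ := startDecomp hAk (by omega) (by omega)
      simp only [Nat.add_sub_cancel_left] at habs1
      refine ⟨p₀, 0, hfq ▸ hfin, Or.inl ⟨rfl, hp₀⟩, ?_⟩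
      refine Relation.ReflTransGen.trans (Relation.ReflTransGen.tail (liftP habs1) ?_)
        (liftP habs2)
      exact Or.inr (Or.inl ⟨rfl, rfl, hr1, g, hdel,
        Or.inr ⟨⟨hc1pair ▸ hAg, hc1pair ▸ hBv⟩, rfl, rfl⟩⟩)
  · -- Case (i) : c₂ lies strictly inside the word
    have hc2b : 1 ≤ c₂.2 ∧ c₂.2 ≤ u.length := ⟨hCs.1, hCs.2.1⟩
    have h11 : 1 ≤ c₁.2 := by
      rcases Relation.ReflTransGen.cases_head hB with hB0 | ⟨bd, hBs, _⟩
      · rw [hB0]; omega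
      · exact hBs.1
    have hi2 : c₂.2 = c₁.2 - 1 + w.length + z.length := by omega
    set x := u.take (c₁.2 - 1) with hxdef
    have hxl : x.length = c₁.2 - 1 := by simp [hxdef]; omega
    set y := (u.drop (c₁.2 - 1)).drop (w.length + z.length) with hydef
    have hudec : u = x ++ ((w ++ z) ++ y) := by
      have h1 : u = x ++ u.drop (c₁.2 - 1) := (List.take_append_drop _ u).symm
      have h2 : w ++ z = (u.drop (c₁.2 - 1)).take (w.length + z.length) := by
        rw [hweq]
        congr 1
        omega
      have h3 : u.drop (c₁.2 - 1) = (w ++ z) ++ y := by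
        rw [hydef, h2]
        simp [← List.length_append]
      rw [← h3]
      exact h1
    set v := x ++ w with hvdef
    set r := z ++ y with hrdef
    have hu' : u = v ++ r := by rw [hvdef, hrdef, hudec]; simp
    have hbl : v.length = c₁.2 - 1 + w.length := by simp [hvdef, hxl]
    have ha : c₁.2 = x.length + 1 := by omega
    rw [hu'] at hA hB hC
    have hc1pair : c₁ = (q₁, x.length + 1) := by rw [← hq1, ← ha]
    obtain ⟨n₂, hB'⟩ := hB.toRunN
    obtain ⟨p, k₂, _, hBv, hBrem⟩ := first_return hB' (by omega) (by omega)
    have habs2 := plainDecomp hBrem (by omega) (by omega)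
    simp only [Nat.add_sub_cancel_left] at habs2
    have hc2rel : c₂.2 - v.length = z.length := by omega
    rw [hc2rel, hq2] at habs2
    obtain ⟨n₃, hC'⟩ := hC.toRunN
    have habs3 : Relation.ReflTransGen (PStep M (BR M v) r) (q₂, z.length) (f, r.length + 1) := by
      have h := plainDecomp hC' (by omega) (by simp)
      have e1 : ((f, (v ++ r).length + 1).1, (f, (v ++ r).length + 1).2 - v.length)
          = ((f, r.length + 1) : Q × ℕ) := by simp; omega
      have e2 : ((c₂.1, c₂.2 - v.length) : Q × ℕ) = (q₂, z.length) := by rw [hc2rel, hq2]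
      rwa [e1, e2] at h
    have hbump : TStep M q₂ (BR M v) (BR1 M q₁ v (x.length + 1)) (some z.length) r
        ((q₂, z.length), 1) ((q₂, z.length), 2) :=
      Or.inr (Or.inr ⟨z.length, rfl, rfl, rfl, rfl, rfl⟩)
    obtain ⟨n₁, hA'⟩ := hA.toRunN
    refine ⟨x, Or.inl ?_⟩
    rcases last_entry hA' (by omega) with hAv | ⟨g', g, k, hk, hAk, hr1, hdel, hAg⟩
    · refine ⟨y, f, p, 1, hfin, Or.inr ⟨rfl, ⟨hc1pair ▸ hAv, hc1pair ▸ hBv⟩⟩, ?_⟩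
      exact ((liftP habs2).tail hbump).trans (liftP habs3)
    · obtain ⟨p₀, hp₀, habs1⟩ := startDecomp hAk (by omega) (by omega)
      simp only [Nat.add_sub_cancel_left] at habs1
      refine ⟨y, f, p₀, 0, hfin, Or.inl ⟨rfl, hp₀⟩, ?_⟩
      refine Relation.ReflTransGen.trans (Relation.ReflTransGen.tail (liftP habs1) ?_)
        (((liftP habs2).tail hbump).trans (liftP habs3))
      exact Or.inr (Or.inl ⟨rfl, rfl, hr1, g, hdel,
        Or.inr ⟨⟨hc1pair ▸ hAg, hc1pair ▸ hBv⟩, rfl, rfl⟩⟩)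

/-! ### Stitching abstract runs back into concrete runs -/

/-- A concrete run from `c` to `c'` passing through the markers indicated by the modes. -/
def Thread (M : TwoNFA A Q) (u' : List A) (m₁ m₂ : Q × ℕ) (μ μ' : ℕ) (c c' : Q × ℕ) : Prop :=
  (μ = 0 ∧ μ' = 0 ∧ RT M u' c c') ∨
  (μ = 1 ∧ μ' = 1 ∧ RT M u' c c') ∨
  (μ = 2 ∧ μ' = 2 ∧ RT M u' c c') ∨
  (μ = 0 ∧ μ' = 1 ∧ RT M u' c m₁ ∧ RT M u' m₁ c') ∨
  (μ = 1 ∧ μ' = 2 ∧ RT M u' c m₂ ∧ RT M u' m₂ c') ∨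
  (μ = 0 ∧ μ' = 2 ∧ RT M u' c m₁ ∧ RT M u' m₁ m₂ ∧ RT M u' m₂ c')

theorem thread_of_rt {u' : List A} {m₁ m₂ : Q × ℕ} {μ : ℕ} {c c' : Q × ℕ} (hμ : μ ≤ 2)
    (h : RT M u' c c') : Thread M u' m₁ m₂ μ μ c c' := by
  rcases μ with _ | _ | _ | μ
  · exact Or.inl ⟨rfl, rfl, h⟩
  · exact Or.inr (Or.inl ⟨rfl, rfl, h⟩)
  · exact Or.inr (Or.inr (Or.inl ⟨rfl, rfl, h⟩))
  · omega

theorem thread_trans {u' : List A} {m₁ m₂ : Q × ℕ} {μ μ'' μ' : ℕ} {c c'' c' : Q × ℕ}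
    (h1 : Thread M u' m₁ m₂ μ μ'' c c'') (h2 : Thread M u' m₁ m₂ μ'' μ' c'' c') :
    Thread M u' m₁ m₂ μ μ' c c' := by
  unfold Thread at *
  rcases h1 with ⟨h1a,h1b,hA⟩|⟨h1a,h1b,hA⟩|⟨h1a,h1b,hA⟩|⟨h1a,h1b,hA,hB⟩|⟨h1a,h1b,hA,hB⟩|⟨h1a,h1b,hA,hB,hC⟩ <;>
    rcases h2 with ⟨h2a,h2b,hD⟩|⟨h2a,h2b,hD⟩|⟨h2a,h2b,hD⟩|⟨h2a,h2b,hD,hE⟩|⟨h2a,h2b,hD,hE⟩|⟨h2a,h2b,hD,hE,hF⟩ <;>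
    subst_vars <;>
    first
    | omega
    | exact Or.inl ⟨rfl, rfl, hA.trans hD⟩
    | exact Or.inr (Or.inl ⟨rfl, rfl, hA.trans hD⟩)
    | exact Or.inr (Or.inr (Or.inl ⟨rfl, rfl, hA.trans hD⟩))
    | exact Or.inr (Or.inr (Or.inr (Or.inl ⟨rfl, rfl, hA.trans hD, hE⟩)))
    | exact Or.inr (Or.inr (Or.inr (Or.inl ⟨rfl, rfl, hA, hB.trans hD⟩)))
    | exact Or.inr (Or.inr (Or.inr (Or.inr (Or.inl ⟨rfl, rfl, hA.trans hD, hE⟩))))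
    | exact Or.inr (Or.inr (Or.inr (Or.inr (Or.inl ⟨rfl, rfl, hA, hB.trans hD⟩))))
    | exact Or.inr (Or.inr (Or.inr (Or.inr (Or.inr ⟨rfl, rfl, hA.trans hD, hE, hF⟩))))
    | exact Or.inr (Or.inr (Or.inr (Or.inr (Or.inr ⟨rfl, rfl, hA, hB.trans hD, hE⟩))))
    | exact Or.inr (Or.inr (Or.inr (Or.inr (Or.inr ⟨rfl, rfl, hA, hB, hC.trans hD⟩))))

theorem stitchRun {q₁ q₂ : Q} {v' r : List A} {a' : ℕ} {bo : Option ℕ} {m₂ : Q × ℕ}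
    (hbo : ∀ j, bo = some j → m₂ = (q₂, v'.length + j))
    {x x' : (Q × ℕ) × ℕ}
    (h : Relation.ReflTransGen (TStep M q₂ (BR M v') (BR1 M q₁ v' a') bo r) x x')
    (hμ : x.2 ≤ 2) :
    x'.2 ≤ 2 ∧ Thread M (v' ++ r) (q₁, a') m₂ x.2 x'.2
      (x.1.1, v'.length + x.1.2) (x'.1.1, v'.length + x'.1.2) := by
  induction h with
  | refl => exact ⟨hμ, thread_of_rt hμ Relation.ReflTransGen.refl⟩
  | @tail b c hab hbc ih =>
    obtain ⟨hb2, hth⟩ := ih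
    suffices key : c.2 ≤ 2 ∧ Thread M (v' ++ r) (q₁, a') m₂ b.2 c.2
        (b.1.1, v'.length + b.1.2) (c.1.1, v'.length + c.1.2) by
      exact ⟨key.1, thread_trans hth key.2⟩
    rcases hbc with ⟨he, hr⟩ | ⟨hy1, hz1, hr1, q, hdel, hcase⟩ | ⟨j, hboj, hyy, hzz, hy2, hz2⟩
    · refine ⟨by omega, ?_⟩
      rw [he]
      exact thread_of_rt hb2 (Relation.ReflTransGen.single (step_shift hr))
    · have hstep : Step M (v' ++ r) (b.1.1, v'.length + b.1.2) (q, v'.length) := by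
        rw [hy1]
        refine ⟨by omega, by simp; omega, false, ?_, by simp⟩
        rwa [letter_right v' (le_refl 1)]
      rcases hcase with ⟨hmem, he⟩ | ⟨hmem, he0, he1⟩
      · -- plain excursion
        refine ⟨by omega, ?_⟩
        rw [he]
        refine thread_of_rt hb2 ?_
        have : RT M (v' ++ r) (q, v'.length) (c.1.1, v'.length + 1) := by
          have := rt_mono (r := r) hmem
          exact this
        rw [hz1]
        exact Relation.ReflTransGen.head hstep this
      · -- marked excursion
        refine ⟨by omega, ?_⟩
        rw [he0, he1]
        refine Or.inr (Or.inr (Or.inr (Or.inl ⟨rfl, rfl, ?_, ?_⟩)))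
        · exact Relation.ReflTransGen.head hstep (rt_mono hmem.1)
        · rw [hz1]
          exact rt_mono hmem.2
    · -- the bump at the second marker
      refine ⟨by omega, ?_⟩
      rw [hy2, hz2, hyy, hzz, hbo j hboj]
      exact Or.inr (Or.inr (Or.inr (Or.inr (Or.inl
        ⟨rfl, rfl, Relation.ReflTransGen.refl, Relation.ReflTransGen.refl⟩))))

theorem stitch {q₁ q₂ : Q} {w z : List A} (hw : w ≠ []) (x : List A)
    (hacc : AbsAcc M q₂ (Beh M q₁ (x ++ w) (x.length + 1)) z) :
    (w ++ z) ∈ MsetRTG M q₁ q₂ := by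
  classical
  have hwl : 1 ≤ w.length := List.length_pos_iff.mpr hw
  set v' := x ++ w with hv'
  set a' := x.length + 1 with ha'
  rcases hacc with ⟨y, f, p₀, μ₀, hfin, hstart, hrun⟩ | ⟨p₀, μ₀, hfin, hstart, hrun⟩
  · -- second marker inside the right part
    set u' := v' ++ (z ++ y) with hu'
    set m₂ : Q × ℕ := (q₂, v'.length + z.length) with hm₂
    have hbo : ∀ j, (some z.length : Option ℕ) = some j → m₂ = (q₂, v'.length + j) := by
      rintro j hj
      cases hj
      rfl
    obtain ⟨-, hth⟩ := stitchRun (M := M) hbo hrun (by rcases hstart with ⟨h, _⟩ | ⟨h, _⟩ <;> omega)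
    simp only [] at hth
    -- prepend the initial segment
    have hstart' : Thread M u' (q₁, a') m₂ 0 μ₀ (M.init, 1) (p₀, v'.length + 1) := by
      rcases hstart with ⟨h0, hmem⟩ | ⟨h1, hmem⟩
      · rw [h0]
        exact Or.inl ⟨rfl, rfl, rt_mono hmem⟩
      · rw [h1]
        exact Or.inr (Or.inr (Or.inr (Or.inl ⟨rfl, rfl, rt_mono hmem.1, rt_mono hmem.2⟩)))
    have htot := thread_trans hstart' hth
    have hend : ((f, (z ++ y).length + 1).1, v'.length + ((f, (z ++ y).length + 1)).2)
        = ((f, u'.length + 1) : Q × ℕ) := by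
      simp [hu']
      omega
    rw [hend] at htot
    rcases htot with ⟨h1,_,_⟩|⟨h1,_,_⟩|⟨h1,_,_⟩|⟨_,h2,_⟩|⟨h1,_,_⟩|⟨_,_,hA,hB,hC⟩ <;>
      try omega
    refine ⟨u', f, (q₁, a'), m₂, hA, hB, hC, hfin, rfl, rfl, by simp [hm₂, hv', ha']; omega, ?_⟩
    have e1 : a' - 1 = x.length := by omega
    have e2 : u'.drop x.length = (w ++ z) ++ y := by
      rw [hu', hv']
      rw [List.append_assoc, List.drop_left]
      simp
    have e3 : m₂.2 - a' + 1 = (w ++ z).length := by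
      simp [hm₂, hv', ha']
      omega
    rw [e1, e2, e3, List.take_left]
  · -- second marker at the very end of the word
    set u' := v' ++ z with hu'
    have hbo : ∀ j, (none : Option ℕ) = some j → ((q₂, 0) : Q × ℕ) = (q₂, v'.length + j) := by
      rintro j hj
      cases hj
    obtain ⟨-, hth⟩ := stitchRun (M := M) hbo hrun (by rcases hstart with ⟨h, _⟩ | ⟨h, _⟩ <;> omega)
    simp only [] at hth
    have hstart' : Thread M u' (q₁, a') (q₂, 0) 0 μ₀ (M.init, 1) (p₀, v'.length + 1) := by
      rcases hstart with ⟨h0, hmem⟩ | ⟨h1, hmem⟩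
      · rw [h0]
        exact Or.inl ⟨rfl, rfl, rt_mono hmem⟩
      · rw [h1]
        exact Or.inr (Or.inr (Or.inr (Or.inl ⟨rfl, rfl, rt_mono hmem.1, rt_mono hmem.2⟩)))
    have htot := thread_trans hstart' hth
    rcases htot with ⟨h1,h2,_⟩|⟨h1,_,_⟩|⟨h1,_,_⟩|⟨_,_,hA,hB⟩|⟨h1,_,_⟩|⟨_,h2,_⟩ <;>
      try omega
    have hend : ((q₂, z.length + 1).1, v'.length + ((q₂, z.length + 1) : Q × ℕ).2)
        = ((q₂, u'.length + 1) : Q × ℕ) := by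
      simp [hu']
      try omega
    rw [hend] at hB
    refine ⟨u', q₂, (q₁, a'), (q₂, u'.length + 1), hA, hB, Relation.ReflTransGen.refl,
      hfin, rfl, rfl, by simp [hu', hv', ha']; try omega, ?_⟩
    have e1 : a' - 1 = x.length := by omega
    have e2 : u'.drop x.length = w ++ z := by
      rw [hu', hv', List.append_assoc, List.drop_left]
    have e3 : (w ++ z).length ≤ u'.length + 1 - a' + 1 := by
      simp [hu', hv', ha']
      try omega
    rw [e1, e2, (List.take_of_length_le e3)]

/-! ### The Myhill–Nerode style argument -/

instance tbFinite [Finite Q] : Finite (TB Q) := by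
  unfold TB
  infer_instance

/-- The set of realizable behaviors of `x ++ w` over all left contexts `x`. -/
def Inv (M : TwoNFA A Q) (q₁ : Q) (w : List A) : Set (TB Q) :=
  {t | ∃ x : List A, t = Beh M q₁ (x ++ w) (x.length + 1)}

/-- Complete finite invariant of `w`. -/
def Jmap (M : TwoNFA A Q) (q₁ q₂ : Q) (w : List A) : Set (TB Q) × Prop × Prop :=
  (Inv M q₁ w, w ∈ Mset M q₁ q₂, w = [])

/-- Left quotient of `Mset` by `w`. -/
def nuq (M : TwoNFA A Q) (q₁ q₂ : Q) (w : List A) : Set (List A) :=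
  {z | w ++ z ∈ Mset M q₁ q₂}

theorem key_mono {q₁ q₂ : Q} {w w' : List A}
    (hJ : Jmap M q₁ q₂ w = Jmap M q₁ q₂ w') {z : List A} (hz : z ∈ nuq M q₁ q₂ w) :
    z ∈ nuq M q₁ q₂ w' := by
  classical
  have h1 : Inv M q₁ w = Inv M q₁ w' := congrArg Prod.fst hJ
  have h2 : (w ∈ Mset M q₁ q₂) = (w' ∈ Mset M q₁ q₂) := congrArg (fun t => t.2.1) hJ
  have h3 : (w = []) = (w' = []) := congrArg (fun t => t.2.2) hJ
  by_cases hze : z = []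
  · subst hze
    have hw : w ∈ Mset M q₁ q₂ := by
      have : w ++ [] ∈ Mset M q₁ q₂ := hz
      simpa using this
    have hw' : w' ∈ Mset M q₁ q₂ := cast h2 hw
    show w' ++ [] ∈ Mset M q₁ q₂
    simpa using hw'
  · by_cases hwe : w = []
    · have hw'e : w' = [] := cast h3 hwe
      simp only [nuq, Set.mem_setOf_eq, hwe, hw'e] at hz ⊢
      exact hz
    · have hw'e : w' ≠ [] := fun h => hwe (cast h3.symm h)
      have hrtg : (w ++ z) ∈ MsetRTG M q₁ q₂ := (mset_eq_rtg M q₁ q₂) ▸ hz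
      obtain ⟨x, habs⟩ := decompose hwe hze hrtg
      have hmem : Beh M q₁ (x ++ w) (x.length + 1) ∈ Inv M q₁ w := ⟨x, rfl⟩
      rw [h1] at hmem
      obtain ⟨x', he⟩ := hmem
      rw [he] at habs
      have := stitch hw'e x' habs
      show (w' ++ z) ∈ Mset M q₁ q₂
      rw [mset_eq_rtg M q₁ q₂]
      exact this

theorem nuq_congr {q₁ q₂ : Q} {w w' : List A}
    (hJ : Jmap M q₁ q₂ w = Jmap M q₁ q₂ w') : nuq M q₁ q₂ w = nuq M q₁ q₂ w' :=
  Set.ext fun _ => ⟨key_mono hJ, key_mono hJ.symm⟩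

theorem nuq_finite_range [Finite Q] (M : TwoNFA A Q) (q₁ q₂ : Q) :
    (Set.range (nuq M q₁ q₂)).Finite := by
  classical
  set g : Set (TB Q) × Prop × Prop → Set (List A) := fun t =>
    if h : ∃ w, Jmap M q₁ q₂ w = t then nuq M q₁ q₂ h.choose else ∅ with hg
  have hfac : ∀ w, nuq M q₁ q₂ w = g (Jmap M q₁ q₂ w) := by
    intro w
    have hex : ∃ w', Jmap M q₁ q₂ w' = Jmap M q₁ q₂ w := ⟨w, rfl⟩
    rw [hg]
    simp only [hex, dif_pos]
    exact (nuq_congr hex.choose_spec).symm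
  have hsub : Set.range (nuq M q₁ q₂) ⊆ Set.range g := by
    rintro s ⟨w, rfl⟩
    exact ⟨Jmap M q₁ q₂ w, (hfac w).symm⟩
  exact (Set.finite_range g).subset hsub

theorem nuq_append {q₁ q₂ : Q} {w w' : List A} (h : nuq M q₁ q₂ w = nuq M q₁ q₂ w')
    (c : A) : nuq M q₁ q₂ (w ++ [c]) = nuq M q₁ q₂ (w' ++ [c]) := by
  ext z
  show (w ++ [c]) ++ z ∈ Mset M q₁ q₂ ↔ (w' ++ [c]) ++ z ∈ Mset M q₁ q₂
  rw [List.append_assoc, List.append_assoc]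
  constructor
  · intro hm
    have : [c] ++ z ∈ nuq M q₁ q₂ w := hm
    rw [h] at this
    exact this
  · intro hm
    have : [c] ++ z ∈ nuq M q₁ q₂ w' := hm
    rw [← h] at this
    exact this

theorem dfa_transport {α : Type*} {σ₀ : Type*} {σ₁ : Type*} (e : σ₀ ≃ σ₁) (D₀ : DFA α σ₀) :
    ∃ D₁ : DFA α σ₁, D₁.accepts = D₀.accepts := by
  classical
  set D₁ : DFA α σ₁ :=
    { step := fun s c => e (D₀.step (e.symm s) c)
      start := e D₀.start
      accept := e.symm ⁻¹' D₀.accept } with hD₁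
  refine ⟨D₁, ?_⟩
  have hev : ∀ (w : List α) (s : σ₀), D₁.evalFrom (e s) w = e (D₀.evalFrom s w) := by
    intro w
    induction w with
    | nil => intro s; simp [DFA.evalFrom]
    | cons c w ih =>
      intro s
      show D₁.evalFrom (e s) (c :: w) = _
      rw [show D₁.evalFrom (e s) (c :: w) = D₁.evalFrom (D₁.step (e s) c) w from rfl]
      have hstep : D₁.step (e s) c = e (D₀.step s c) := by
        simp [hD₁]
      rw [hstep, ih]
      rfl
  ext w
  rw [DFA.mem_accepts, DFA.mem_accepts]
  show D₁.evalFrom D₁.start w ∈ D₁.accept ↔ _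
  have : D₁.start = e D₀.start := rfl
  rw [this, hev w D₀.start]
  simp only [hD₁, Set.mem_preimage, Equiv.symm_apply_apply]
  exact Iff.rfl

end Stmt13

/-- For every 2NFA `M` and states `q₁, q₂`, the language `M_{q₁,q₂}` is regular. -/
theorem stmt13 {A Q : Type*} [Inhabited A] [Fintype Q] (M : TwoNFA A Q) (q₁ q₂ : Q) :
    ∃ (σ : Type) (_ : Fintype σ) (D : DFA A σ), D.accepts = Mset M q₁ q₂ := by
  classical
  have hfin : (Set.range (Stmt13.nuq M q₁ q₂)).Finite := Stmt13.nuq_finite_range M q₁ q₂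
  set ν := Stmt13.nuq M q₁ q₂ with hν
  haveI : Fintype ↥(Set.range ν) := hfin.fintype
  set D : DFA A ↥(Set.range ν) :=
    { step := fun s c => ⟨ν ((Set.mem_range.mp s.2).choose ++ [c]), Set.mem_range_self _⟩
      start := ⟨ν [], Set.mem_range_self _⟩
      accept := {s | [] ∈ s.1} } with hD
  have heval : ∀ w, (D.eval w).1 = ν w := by
    intro w
    induction w using List.reverseRecOn with
    | nil => rfl
    | append_singleton w c ih =>
      rw [DFA.eval_append_singleton]
      show ν ((Set.mem_range.mp (D.eval w).2).choose ++ [c]) = ν (w ++ [c])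
      apply Stmt13.nuq_append
      exact ((Set.mem_range.mp (D.eval w).2).choose_spec).trans ih
  have hacc : D.accepts = Mset M q₁ q₂ := by
    ext w
    have h1 : w ∈ D.accepts ↔ [] ∈ (D.eval w).1 := by
      rw [DFA.mem_accepts]
      exact Iff.rfl
    rw [h1, heval w]
    show ([] ∈ ν w) ↔ w ∈ Mset M q₁ q₂
    rw [hν]
    show (w ++ [] ∈ Mset M q₁ q₂) ↔ w ∈ Mset M q₁ q₂
    simp
  obtain ⟨D₁, hD₁⟩ := Stmt13.dfa_transport (Fintype.equivFin ↥(Set.range ν)) D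
  exact ⟨Fin (Fintype.card ↥(Set.range ν)), inferInstance, D₁, hD₁.trans hacc⟩
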